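/- Let H be a complex Hilbert space, e₁,…,e_m an orthonormal family, x₁,…,xₙ ∈ H, and M_{jk} ≥ 0 with ‖xⱼ‖ − Re⟨eₖ,xⱼ⟩ ≤ M_{jk} for all j,k. Then equality ∑ⱼ‖xⱼ‖ = (1/√m)‖∑ⱼ xⱼ‖ + (1/m)∑ⱼ∑ₖ M_{jk} holds if and only if ∑ⱼ‖xⱼ‖ ≥ (1/m)∑ⱼ∑ₖ M_{jk} and ∑ⱼ xⱼ = (∑ⱼ‖xⱼ‖ − (1/m)∑ⱼ∑ₖ M_{jk}) ∑ₖ eₖ. -/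

import Mathlib

theorem stmt14 {H : Type*} [NormedAddCommGroup H] [InnerProductSpace ℂ H]
    (m n : ℕ) (hm : 0 < m) (e : Fin m → H) (he : Orthonormal ℂ e) (x : Fin n → H)
    (M : Fin n → Fin m → ℝ) (hM : ∀ j k, 0 ≤ M j k)
    (h : ∀ j k, ‖x j‖ - (inner ℂ (e k) (x j) : ℂ).re ≤ M j k) :
    ∑ j, ‖x j‖ = (1 / Real.sqrt m) * ‖∑ j, x j‖ + (1 / m) * ∑ j, ∑ k, M j k ↔
      ((1 / m) * ∑ j, ∑ k, M j k ≤ ∑ j, ‖x j‖ ∧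
        ∑ j, x j = ((∑ j, ‖x j‖ - (1 / m) * ∑ j, ∑ k, M j k : ℝ) : ℂ) • ∑ k, e k) := by
  set S : H := ∑ j, x j with hS
  set u : H := ∑ k, e k with hu
  set A : ℝ := ∑ j, ‖x j‖ with hA
  set B : ℝ := (1 / m) * ∑ j, ∑ k, M j k with hB
  have hm' : (0:ℝ) < m := by exact_mod_cast hm
  have hsm : Real.sqrt m > 0 := Real.sqrt_pos.2 hm'
  have hsm2 : Real.sqrt m * Real.sqrt m = m := Real.mul_self_sqrt hm'.le
  have huu : (inner ℂ u u : ℂ) = (m : ℂ) := by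
    rw [hu, inner_sum]
    simp only [sum_inner, orthonormal_iff_ite.mp he]
    simp
  have hun : ‖u‖ = Real.sqrt m := by
    rw [norm_eq_sqrt_re_inner (𝕜 := ℂ) u, huu]
    norm_num
  -- the real part of ⟪u, S⟫
  have hre : ((inner ℂ u S : ℂ)).re = ∑ j, ∑ k, ((inner ℂ (e k) (x j) : ℂ)).re := by
    rw [hu, hS, sum_inner, Complex.re_sum]
    rw [Finset.sum_comm]
    congr 1
    ext j
    rw [inner_sum, Complex.re_sum]
  have h1 : (m:ℝ) * A - (m:ℝ) * B ≤ ((inner ℂ u S : ℂ)).re := by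
    have hmB : (m:ℝ) * B = ∑ j, ∑ k, M j k := by
      rw [hB]; field_simp
    have hmA : (m:ℝ) * A = ∑ j, ∑ _k : Fin m, ‖x j‖ := by
      rw [hA, Finset.mul_sum]
      refine Finset.sum_congr rfl fun j _ => ?_
      simp [Finset.sum_const, mul_comm]
    rw [hre, hmB, hmA, ← Finset.sum_sub_distrib]
    apply Finset.sum_le_sum
    intro j _
    rw [← Finset.sum_sub_distrib]
    apply Finset.sum_le_sum
    intro k _
    linarith [h j k]
  constructor
  · intro heq
    have hSn : ‖S‖ = Real.sqrt m * (A - B) := by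
      have : A - B = (1 / Real.sqrt m) * ‖S‖ := by linarith
      rw [this]; field_simp
    have h2 : ((inner ℂ u S : ℂ)).re ≤ ‖u‖ * ‖S‖ := by
      simpa [RCLike.re_to_complex] using re_inner_le_norm (𝕜 := ℂ) u S
    have h3 : ‖u‖ * ‖S‖ = (m:ℝ) * A - (m:ℝ) * B := by
      rw [hun, hSn, ← mul_assoc, hsm2]; ring
    have h4 : ((inner ℂ u S : ℂ)).re = ‖u‖ * ‖S‖ := le_antisymm h2 (h3 ▸ h1)
    have h5 : ‖(inner ℂ u S : ℂ)‖ ≤ ‖u‖ * ‖S‖ := norm_inner_le_norm u S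
    have h6 : (inner ℂ u S : ℂ) = ((‖u‖ * ‖S‖ : ℝ) : ℂ) := by
      have ha := Complex.re_le_norm (inner ℂ u S : ℂ)
      have hre6 : ((inner ℂ u S : ℂ)).re = ‖(inner ℂ u S : ℂ)‖ := by
        linarith
      have him : ((inner ℂ u S : ℂ)).im = 0 := by
        have hsq := Complex.sq_norm (inner ℂ u S : ℂ)
        rw [Complex.normSq_apply] at hsq
        have him2 : ((inner ℂ u S : ℂ)).im * ((inner ℂ u S : ℂ)).im = 0 := by
          linear_combination -hsq - (((inner ℂ u S : ℂ)).re + ‖(inner ℂ u S : ℂ)‖) * hre6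
        exact mul_self_eq_zero.mp him2
      apply Complex.ext
      · simp [h4]
      · simp [him]
    have h7 : ((‖S‖ : ℂ)) • u = ((‖u‖ : ℂ)) • S := by
      exact (inner_eq_norm_mul_iff (𝕜 := ℂ) (E := H) (x := u) (y := S)).mp
        (by rw [h6]; push_cast; rfl)
    have hAB : 0 ≤ A - B := by
      have : 0 ≤ ‖S‖ := norm_nonneg S
      nlinarith
    refine ⟨by linarith, ?_⟩
    have : S = ((A - B : ℝ) : ℂ) • u := by
      have h8 : ((Real.sqrt m : ℂ)) • S = ((Real.sqrt m * (A - B) : ℝ) : ℂ) • u := by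
        rw [← hSn, ← hun]; exact h7.symm
      have h9 : ((Real.sqrt m : ℂ)) • S = ((Real.sqrt m : ℂ)) • (((A - B : ℝ) : ℂ) • u) := by
        rw [h8, smul_smul]; push_cast; ring_nf
      have hne : ((Real.sqrt m : ℂ)) ≠ 0 := by
        simp only [ne_eq, Complex.ofReal_eq_zero]
        exact hsm.ne'
      exact smul_right_injective H hne h9
    exact this
  · rintro ⟨hBA, hSe⟩
    have hSn : ‖S‖ = (A - B) * Real.sqrt m := by
      rw [hSe, norm_smul, hun, Complex.norm_real, Real.norm_eq_abs,
        abs_of_nonneg (by linarith : (0:ℝ) ≤ A - B)]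
    rw [hSn]
    field_simp
    ring
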